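/- Let N ≥ 2 be an integer and c, x real numbers. Then (x/2)^{N-1} · ∑_{p=0}^∞ (-1)^p c^p (x/2)^{2p} / (p!)^2 = ∑_{n=0}^∞ (2n+N-1) · [ ∑_{p=0}^n (-1)^p c^p/(p!)^2 · (p+n+N-2)!/(n-p)! ] · J_{2n+N-1}(x), where both series converge absolutely. -/

import Mathlib

open Finset


/-- Bessel function of the first kind of nonnegative integer order. -/
noncomputable def besselJ (ν : ℕ) (x : ℝ) : ℝ :=
  ∑' p : ℕ, (-1 : ℝ) ^ p / ((Nat.factorial p : ℝ) * (Nat.factorial (p + ν) : ℝ)) *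
    (x / 2) ^ (2 * p + ν)

private lemma factR_ne (n : ℕ) : (Nat.factorial n : ℝ) ≠ 0 := by
  exact_mod_cast (Nat.factorial_pos n).ne'

private lemma factR_pos (n : ℕ) : (0 : ℝ) < (Nat.factorial n : ℝ) := by
  exact_mod_cast Nat.factorial_pos n

private lemma tele_step (β i j : ℕ) :
    ((j + i : ℕ) : ℝ) * ((-1) ^ j * (2 * j + β + 1) * (Nat.factorial (j + β)) /
      (Nat.factorial j * Nat.factorial i * Nat.factorial (2 * j + i + β + 1)))
    = (-(-1 : ℝ) ^ (j + 1) * (j + 1) * i * (Nat.factorial (j + β + 1)) /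
        (Nat.factorial (j + 1) * Nat.factorial i * Nat.factorial (2 * j + i + β + 1)))
      - (-(-1 : ℝ) ^ j * j * (i + 1) * (Nat.factorial (j + β)) /
        (Nat.factorial j * Nat.factorial (i + 1) * Nat.factorial (2 * j + i + β))) := by
  have h1 : (Nat.factorial (j + 1) : ℝ) = (j + 1) * Nat.factorial j := by
    rw [Nat.factorial_succ]; push_cast; ring
  have h2 : (Nat.factorial (i + 1) : ℝ) = (i + 1) * Nat.factorial i := by
    rw [Nat.factorial_succ]; push_cast; ring
  have h3 : (Nat.factorial (j + β + 1) : ℝ) = (j + β + 1) * Nat.factorial (j + β) := by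
    rw [Nat.factorial_succ]; push_cast; ring
  have h4 : (Nat.factorial (2 * j + i + β + 1) : ℝ)
      = (2 * j + i + β + 1) * Nat.factorial (2 * j + i + β) := by
    rw [Nat.factorial_succ]; push_cast; ring
  rw [h1, h2, h3, h4]
  have e1 := factR_ne j
  have e2 := factR_ne i
  have e3 := factR_ne (j + β)
  have e4 := factR_ne (2 * j + i + β)
  have p1 : ((j : ℝ) + 1) ≠ 0 := by positivity
  have p2 : ((i : ℝ) + 1) ≠ 0 := by positivity
  have p4 : ((2 * (j : ℝ) + i + β + 1)) ≠ 0 := by positivity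
  push_cast
  field_simp
  ring

private lemma telescope (β M : ℕ) (hM : 1 ≤ M) :
    ∑ j ∈ range (M + 1), ((-1 : ℝ) ^ j * (2 * j + β + 1) * (Nat.factorial (j + β)) /
      (Nat.factorial j * Nat.factorial (M - j) * Nat.factorial (j + M + β + 1))) = 0 := by
  set g : ℕ → ℝ := fun j => -(-1 : ℝ) ^ j * j * (M + 1 - j) * (Nat.factorial (j + β)) /
    (Nat.factorial j * Nat.factorial (M + 1 - j) * Nat.factorial (j + M + β)) with hg
  have key : ∀ j ∈ range (M + 1),
      (M : ℝ) * ((-1 : ℝ) ^ j * (2 * j + β + 1) * (Nat.factorial (j + β)) /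
        (Nat.factorial j * Nat.factorial (M - j) * Nat.factorial (j + M + β + 1)))
      = g (j + 1) - g j := by
    intro j hj
    rw [mem_range] at hj
    obtain ⟨i, rfl⟩ : ∃ i, M = j + i := ⟨M - j, by omega⟩
    have a1 : j + i - j = i := by omega
    have a2 : j + (j + i) + β + 1 = 2 * j + i + β + 1 := by omega
    have a3 : j + i + 1 - (j + 1) = i := by omega
    have a4 : j + 1 + β = j + β + 1 := by omega
    have a5 : j + 1 + (j + i) + β = 2 * j + i + β + 1 := by omega
    have a6 : j + i + 1 - j = i + 1 := by omega
    have a7 : j + (j + i) + β = 2 * j + i + β := by omega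
    rw [hg]
    simp only [a1, a2, a3, a4, a5, a6, a7]
    have := tele_step β i j
    push_cast at this ⊢
    convert this using 2 <;> push_cast <;> ring
  have hMne : (M : ℝ) ≠ 0 := by
    have : 0 < M := hM
    positivity
  have hsum : (M : ℝ) * ∑ j ∈ range (M + 1), ((-1 : ℝ) ^ j * (2 * j + β + 1) *
      (Nat.factorial (j + β)) /
      (Nat.factorial j * Nat.factorial (M - j) * Nat.factorial (j + M + β + 1))) = 0 := by
    rw [mul_sum, Finset.sum_congr rfl key, Finset.sum_range_sub]
    have hg0 : g 0 = 0 := by simp [hg]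
    have hgM : g (M + 1) = 0 := by
      simp only [hg]
      push_cast
      ring
    rw [hg0, hgM, sub_zero]
  exact (mul_eq_zero.mp hsum).resolve_left hMne

private lemma coeff (N : ℕ) (hN : 2 ≤ N) (c : ℝ) (k : ℕ) :
    ∑ n ∈ range (k + 1), ((2 * n + N : ℝ) - 1) *
      (∑ p ∈ range (n + 1), (-1 : ℝ) ^ p * c ^ p / (Nat.factorial p : ℝ) ^ 2 *
        (Nat.factorial (p + n + N - 2) : ℝ) / (Nat.factorial (n - p) : ℝ)) *
      ((-1 : ℝ) ^ (k - n) / ((Nat.factorial (k - n) : ℝ) * (Nat.factorial (k + n + N - 1) : ℝ)))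
    = (-1 : ℝ) ^ k * c ^ k / (Nat.factorial k : ℝ) ^ 2 := by
  have swap :
      ∑ n ∈ range (k + 1), ∑ p ∈ range (n + 1),
        (((2 * n + N : ℝ) - 1) *
          ((-1 : ℝ) ^ p * c ^ p / (Nat.factorial p : ℝ) ^ 2 *
            (Nat.factorial (p + n + N - 2) : ℝ) / (Nat.factorial (n - p) : ℝ)) *
          ((-1 : ℝ) ^ (k - n) / ((Nat.factorial (k - n) : ℝ) * (Nat.factorial (k + n + N - 1) : ℝ))))
      = ∑ p ∈ range (k + 1), ∑ n ∈ Finset.Ico p (k + 1),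
        (((2 * n + N : ℝ) - 1) *
          ((-1 : ℝ) ^ p * c ^ p / (Nat.factorial p : ℝ) ^ 2 *
            (Nat.factorial (p + n + N - 2) : ℝ) / (Nat.factorial (n - p) : ℝ)) *
          ((-1 : ℝ) ^ (k - n) / ((Nat.factorial (k - n) : ℝ) * (Nat.factorial (k + n + N - 1) : ℝ)))) := by
    simp only [Finset.range_eq_Ico]
    rw [← Finset.sum_Ico_Ico_comm 0 (k + 1)]
  have inner : ∀ p ∈ range (k + 1),
      (∑ n ∈ Finset.Ico p (k + 1),
        (((2 * n + N : ℝ) - 1) *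
          ((-1 : ℝ) ^ p * c ^ p / (Nat.factorial p : ℝ) ^ 2 *
            (Nat.factorial (p + n + N - 2) : ℝ) / (Nat.factorial (n - p) : ℝ)) *
          ((-1 : ℝ) ^ (k - n) / ((Nat.factorial (k - n) : ℝ) * (Nat.factorial (k + n + N - 1) : ℝ)))))
      = if p = k then (-1 : ℝ) ^ k * c ^ k / (Nat.factorial k : ℝ) ^ 2 else 0 := by
    intro p hp
    rw [mem_range] at hp
    have hpk : p ≤ k := by omega
    set M := k - p with hM
    set β := 2 * p + N - 2 with hβ
    rw [Finset.sum_Ico_eq_sum_range]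
    have hkp : k + 1 - p = M + 1 := by omega
    rw [hkp]
    have congrterm : ∀ j ∈ range (M + 1),
        ((2 * ((p + j : ℕ) : ℝ) + (N : ℝ) - 1) *
          ((-1 : ℝ) ^ p * c ^ p / (Nat.factorial p : ℝ) ^ 2 *
            (Nat.factorial (p + (p + j) + N - 2) : ℝ) / (Nat.factorial (p + j - p) : ℝ)) *
          ((-1 : ℝ) ^ (k - (p + j)) /
            ((Nat.factorial (k - (p + j)) : ℝ) * (Nat.factorial (k + (p + j) + N - 1) : ℝ))))
        = ((-1 : ℝ) ^ p * c ^ p / (Nat.factorial p : ℝ) ^ 2 * (-1 : ℝ) ^ M) *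
          ((-1 : ℝ) ^ j * (2 * j + β + 1) * (Nat.factorial (j + β)) /
            (Nat.factorial j * Nat.factorial (M - j) * Nat.factorial (j + M + β + 1))) := by
      intro j hj
      rw [mem_range] at hj
      have hjM : j ≤ M := by omega
      have b1 : p + (p + j) + N - 2 = j + β := by omega
      have b2 : p + j - p = j := by omega
      have b3 : k - (p + j) = M - j := by omega
      have b4 : k + (p + j) + N - 1 = j + M + β + 1 := by omega
      have b5 : (2 * ((p + j : ℕ) : ℝ) + (N : ℝ) - 1) = (2 * (j : ℝ) + (β : ℝ) + 1 : ℝ) := by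
        have h2 : (β : ℕ) + 2 = 2 * p + N := by omega
        have h3 : (β : ℝ) + 2 = 2 * p + N := by exact_mod_cast congrArg (Nat.cast (R := ℝ)) h2
        push_cast
        linarith
      have b6 : (-1 : ℝ) ^ (k - (p + j)) = (-1 : ℝ) ^ M * (-1 : ℝ) ^ j := by
        rw [b3]
        have hMj : (-1 : ℝ) ^ (M - j) * (-1 : ℝ) ^ j = (-1 : ℝ) ^ M := by
          rw [← pow_add]; congr 1; omega
        have hsq : ((-1 : ℝ) ^ j) ^ 2 = 1 := by
          rw [← pow_mul, mul_comm, pow_mul]; simp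
        calc (-1 : ℝ) ^ (M - j) = (-1 : ℝ) ^ (M - j) * (((-1 : ℝ) ^ j) ^ 2) := by rw [hsq, mul_one]
          _ = ((-1 : ℝ) ^ (M - j) * (-1 : ℝ) ^ j) * (-1 : ℝ) ^ j := by ring
          _ = (-1 : ℝ) ^ M * (-1 : ℝ) ^ j := by rw [hMj]
      rw [b1, b2, b4, b5, b6, b3]
      push_cast
      ring
    rw [Finset.sum_congr rfl congrterm, ← Finset.mul_sum]
    by_cases hpk' : p = k
    · subst hpk'
      have hM0 : M = 0 := by omega
      rw [if_pos rfl, hM0]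
      rw [show (0:ℕ) + 1 = 1 from rfl, Finset.sum_range_one]
      have e1 : (0:ℕ) + 0 + β + 1 = β + 1 := by omega
      have e2 : (0:ℕ) + β = β := by omega
      have e3 : (0:ℕ) - 0 = 0 := by omega
      rw [e1, e2, e3, Nat.factorial_succ]
      have hb := factR_ne β
      have hb1 : ((β : ℝ) + 1) ≠ 0 := by positivity
      push_cast
      field_simp
      rw [Nat.factorial_zero]; push_cast; ring
    · rw [if_neg hpk', telescope β M (by omega), mul_zero]
  calc ∑ n ∈ range (k + 1), ((2 * n + N : ℝ) - 1) *
      (∑ p ∈ range (n + 1), (-1 : ℝ) ^ p * c ^ p / (Nat.factorial p : ℝ) ^ 2 *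
        (Nat.factorial (p + n + N - 2) : ℝ) / (Nat.factorial (n - p) : ℝ)) *
      ((-1 : ℝ) ^ (k - n) / ((Nat.factorial (k - n) : ℝ) * (Nat.factorial (k + n + N - 1) : ℝ)))
      = ∑ n ∈ range (k + 1), ∑ p ∈ range (n + 1),
        (((2 * n + N : ℝ) - 1) *
          ((-1 : ℝ) ^ p * c ^ p / (Nat.factorial p : ℝ) ^ 2 *
            (Nat.factorial (p + n + N - 2) : ℝ) / (Nat.factorial (n - p) : ℝ)) *
          ((-1 : ℝ) ^ (k - n) / ((Nat.factorial (k - n) : ℝ) * (Nat.factorial (k + n + N - 1) : ℝ)))) := by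
        refine Finset.sum_congr rfl fun n _ => ?_
        rw [Finset.mul_sum, Finset.sum_mul]
    _ = ∑ p ∈ range (k + 1), (if p = k then (-1 : ℝ) ^ k * c ^ k / (Nat.factorial k : ℝ) ^ 2 else 0) := by
        rw [swap]; exact Finset.sum_congr rfl inner
    _ = (-1 : ℝ) ^ k * c ^ k / (Nat.factorial k : ℝ) ^ 2 := by
        rw [Finset.sum_ite_eq' (range (k + 1)) k]
        simp

private lemma coef_bound (N : ℕ) (hN : 2 ≤ N) (c : ℝ) (n : ℕ) :
    |((2 * n + N : ℝ) - 1) *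
      (∑ p ∈ range (n + 1), (-1 : ℝ) ^ p * c ^ p / (Nat.factorial p : ℝ) ^ 2 *
        (Nat.factorial (p + n + N - 2) : ℝ) / (Nat.factorial (n - p) : ℝ))| /
      (Nat.factorial (2 * n + N - 1) : ℝ)
    ≤ (1 + |c|) ^ n / (Nat.factorial n : ℝ) := by
  have h1 : |((2 * n + N : ℝ) - 1)| = ((2 * n + N - 1 : ℕ) : ℝ) := by
    have hle : 1 ≤ 2 * n + N := by omega
    have hc : ((2 * n + N - 1 : ℕ) : ℝ) = (2 * n + N : ℝ) - 1 := by
      push_cast [Nat.cast_sub hle]; ring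
    rw [← hc, Nat.abs_cast]
  have habsS : |∑ p ∈ range (n + 1), (-1 : ℝ) ^ p * c ^ p / (Nat.factorial p : ℝ) ^ 2 *
        (Nat.factorial (p + n + N - 2) : ℝ) / (Nat.factorial (n - p) : ℝ)|
      ≤ ∑ p ∈ range (n + 1), |c| ^ p / (Nat.factorial p : ℝ) ^ 2 *
        (Nat.factorial (p + n + N - 2) : ℝ) / (Nat.factorial (n - p) : ℝ) := by
    refine (Finset.abs_sum_le_sum_abs _ _).trans_eq (Finset.sum_congr rfl fun p _ => ?_)
    simp [abs_div, abs_mul, abs_pow, Nat.abs_cast]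
  have perp : ∀ p ∈ range (n + 1),
      ((2 * n + N - 1 : ℕ) : ℝ) * (|c| ^ p / (Nat.factorial p : ℝ) ^ 2 *
        (Nat.factorial (p + n + N - 2) : ℝ) / (Nat.factorial (n - p) : ℝ)) /
        (Nat.factorial (2 * n + N - 1) : ℝ)
      ≤ |c| ^ p * (n.choose p : ℝ) / (Nat.factorial n : ℝ) := by
    intro p hp
    rw [mem_range] at hp
    have hpn : p ≤ n := by omega
    have f1 : (Nat.factorial (2 * n + N - 1) : ℝ)
        = ((2 * n + N - 1 : ℕ) : ℝ) * (Nat.factorial (2 * n + N - 2) : ℝ) := by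
      have e : 2 * n + N - 1 = (2 * n + N - 2) + 1 := by omega
      rw [e, Nat.factorial_succ, ← e]
      push_cast
      ring
    have f2 : ((Nat.factorial (p + n + N - 2)) : ℝ) ≤ (Nat.factorial (2 * n + N - 2) : ℝ) := by
      exact_mod_cast Nat.factorial_le (by omega : p + n + N - 2 ≤ 2 * n + N - 2)
    have f3 : (Nat.factorial n : ℝ)
        = (n.choose p : ℝ) * (Nat.factorial p : ℝ) * (Nat.factorial (n - p) : ℝ) := by
      exact_mod_cast (Nat.choose_mul_factorial_mul_factorial hpn).symm
    have hp1 : (1 : ℝ) ≤ (Nat.factorial p : ℝ) := by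
      exact_mod_cast Nat.one_le_iff_ne_zero.mpr (Nat.factorial_pos p).ne'
    have pos2 : (0 : ℝ) < (Nat.factorial n : ℝ) := factR_pos n
    have lhs_eq : ((2 * n + N - 1 : ℕ) : ℝ) * (|c| ^ p / (Nat.factorial p : ℝ) ^ 2 *
        (Nat.factorial (p + n + N - 2) : ℝ) / (Nat.factorial (n - p) : ℝ)) /
        (Nat.factorial (2 * n + N - 1) : ℝ)
        = (|c| ^ p * (((2 * n + N - 1 : ℕ) : ℝ) * (Nat.factorial (p + n + N - 2) : ℝ))) /
          ((Nat.factorial p : ℝ) ^ 2 * (Nat.factorial (n - p) : ℝ) *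
            (Nat.factorial (2 * n + N - 1) : ℝ)) := by
      ring
    rw [lhs_eq, div_le_div_iff₀ (by positivity) pos2, f3, f1]
    have hcom : (0 : ℝ) ≤ |c| ^ p * ((2 * n + N - 1 : ℕ) : ℝ) * (n.choose p : ℝ) *
        (Nat.factorial p : ℝ) * (Nat.factorial (n - p) : ℝ) := by positivity
    have hX : ((Nat.factorial (p + n + N - 2)) : ℝ)
        ≤ (Nat.factorial p : ℝ) * (Nat.factorial (2 * n + N - 2) : ℝ) :=
      f2.trans (le_mul_of_one_le_left (le_of_lt (factR_pos _)) hp1)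
    nlinarith [mul_le_mul_of_nonneg_left hX hcom]
  calc |((2 * n + N : ℝ) - 1) *
      (∑ p ∈ range (n + 1), (-1 : ℝ) ^ p * c ^ p / (Nat.factorial p : ℝ) ^ 2 *
        (Nat.factorial (p + n + N - 2) : ℝ) / (Nat.factorial (n - p) : ℝ))| /
      (Nat.factorial (2 * n + N - 1) : ℝ)
      = ((2 * n + N - 1 : ℕ) : ℝ) * |∑ p ∈ range (n + 1), (-1 : ℝ) ^ p * c ^ p /
          (Nat.factorial p : ℝ) ^ 2 * (Nat.factorial (p + n + N - 2) : ℝ) /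
          (Nat.factorial (n - p) : ℝ)| / (Nat.factorial (2 * n + N - 1) : ℝ) := by
        rw [abs_mul, h1]
    _ ≤ ((2 * n + N - 1 : ℕ) : ℝ) * (∑ p ∈ range (n + 1), |c| ^ p / (Nat.factorial p : ℝ) ^ 2 *
          (Nat.factorial (p + n + N - 2) : ℝ) / (Nat.factorial (n - p) : ℝ)) /
          (Nat.factorial (2 * n + N - 1) : ℝ) := by
        gcongr
    _ = ∑ p ∈ range (n + 1), ((2 * n + N - 1 : ℕ) : ℝ) * (|c| ^ p / (Nat.factorial p : ℝ) ^ 2 *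
          (Nat.factorial (p + n + N - 2) : ℝ) / (Nat.factorial (n - p) : ℝ)) /
          (Nat.factorial (2 * n + N - 1) : ℝ) := by
        rw [Finset.mul_sum, Finset.sum_div]
    _ ≤ ∑ p ∈ range (n + 1), |c| ^ p * (n.choose p : ℝ) / (Nat.factorial n : ℝ) :=
        Finset.sum_le_sum perp
    _ = (1 + |c|) ^ n / (Nat.factorial n : ℝ) := by
        rw [← Finset.sum_div]
        congr 1
        rw [add_comm (1 : ℝ) |c|, add_pow]
        exact Finset.sum_congr rfl fun p _ => by rw [one_pow, mul_one]

set_option maxHeartbeats 1000000 in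
/-- Neumann-type expansion: `(x/2)^{N-1} J_0(√c x)` expanded as an absolutely convergent
series of Bessel functions `J_{2n+N-1}(x)`. -/
theorem stmt_1 (N : ℕ) (hN : 2 ≤ N) (c x : ℝ) :
    Summable (fun p : ℕ =>
      |(-1 : ℝ) ^ p * c ^ p * (x / 2) ^ (2 * p) / (Nat.factorial p : ℝ) ^ 2|) ∧
    Summable (fun n : ℕ =>
      |((2 * n + N : ℝ) - 1) *
        (∑ p ∈ Finset.range (n + 1), (-1 : ℝ) ^ p * c ^ p / (Nat.factorial p : ℝ) ^ 2 *
          (Nat.factorial (p + n + N - 2) : ℝ) / (Nat.factorial (n - p) : ℝ)) *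
        besselJ (2 * n + N - 1) x|) ∧
    (x / 2) ^ (N - 1) *
        ∑' p : ℕ, (-1 : ℝ) ^ p * c ^ p * (x / 2) ^ (2 * p) / (Nat.factorial p : ℝ) ^ 2 =
      ∑' n : ℕ, ((2 * n + N : ℝ) - 1) *
        (∑ p ∈ Finset.range (n + 1), (-1 : ℝ) ^ p * c ^ p / (Nat.factorial p : ℝ) ^ 2 *
          (Nat.factorial (p + n + N - 2) : ℝ) / (Nat.factorial (n - p) : ℝ)) *
        besselJ (2 * n + N - 1) x := by
  -- abbreviations
  set S : ℕ → ℝ := fun n => ∑ p ∈ Finset.range (n + 1),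
    (-1 : ℝ) ^ p * c ^ p / (Nat.factorial p : ℝ) ^ 2 *
      (Nat.factorial (p + n + N - 2) : ℝ) / (Nat.factorial (n - p) : ℝ) with hSdef
  set B : ℕ → ℕ → ℝ := fun n m => (-1 : ℝ) ^ m /
      ((Nat.factorial m : ℝ) * (Nat.factorial (m + (2 * n + N - 1)) : ℝ)) *
      (x / 2) ^ (2 * m + (2 * n + N - 1)) with hBdef
  have hBJ : ∀ n : ℕ, besselJ (2 * n + N - 1) x = ∑' m, B n m := fun n => rfl
  set F : ℕ × ℕ → ℝ := fun q => ((2 * q.1 + N : ℝ) - 1) * S q.1 * B q.1 q.2 with hFdef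
  set G : ℕ → ℝ := fun n => |((2 * n + N : ℝ) - 1) * S n| /
      (Nat.factorial (2 * n + N - 1) : ℝ) * |x / 2| ^ (2 * n + N - 1) with hGdef
  set H : ℕ → ℝ := fun m => ((x / 2) ^ 2) ^ m / (Nat.factorial m : ℝ) with hHdef
  have hH : Summable H := Real.summable_pow_div_factorial ((x / 2) ^ 2)
  have hHnn : ∀ m, 0 ≤ H m := fun m => by
    simp only [hHdef]
    positivity
  have hGnn : ∀ n, 0 ≤ G n := fun n => by
    simp only [hGdef]
    positivity
  -- pow decomposition
  have hpowdec : ∀ n : ℕ, |x / 2| ^ (2 * n + N - 1) = |x / 2| ^ (N - 1) * ((x / 2) ^ 2) ^ n := by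
    intro n
    have e : 2 * n + N - 1 = (N - 1) + 2 * n := by omega
    rw [e, pow_add, pow_mul, sq_abs]
  -- Summability of G
  have hG : Summable G := by
    refine Summable.of_nonneg_of_le hGnn (fun n => ?_)
      ((Real.summable_pow_div_factorial ((1 + |c|) * (x / 2) ^ 2)).mul_left (|x / 2| ^ (N - 1)))
    have h1 : G n ≤ (1 + |c|) ^ n / (Nat.factorial n : ℝ) * |x / 2| ^ (2 * n + N - 1) := by
      simp only [hGdef]
      exact mul_le_mul_of_nonneg_right (coef_bound N hN c n) (by positivity)
    refine h1.trans_eq ?_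
    rw [hpowdec n, mul_pow]
    ring
  -- bound |F| ≤ G * H
  have hFbound : ∀ q : ℕ × ℕ, |F q| ≤ G q.1 * H q.2 := by
    rintro ⟨n, m⟩
    have hBabs : |B n m| = ((x / 2) ^ 2) ^ m * |x / 2| ^ (2 * n + N - 1) /
        ((Nat.factorial m : ℝ) * (Nat.factorial (m + (2 * n + N - 1)) : ℝ)) := by
      simp only [hBdef]
      rw [abs_mul, abs_div, abs_pow, abs_neg, abs_one, one_pow, abs_mul,
        Nat.abs_cast, Nat.abs_cast, abs_pow, pow_add, pow_mul, sq_abs]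
      ring
    have : |F (n, m)| = |((2 * n + N : ℝ) - 1) * S n| * |B n m| := by
      simp only [hFdef]
      rw [abs_mul]
    rw [this, hBabs]
    have hfacle : (Nat.factorial m : ℝ) * (Nat.factorial (2 * n + N - 1) : ℝ)
        ≤ (Nat.factorial m : ℝ) * (Nat.factorial (m + (2 * n + N - 1)) : ℝ) := by
      have := Nat.factorial_le (Nat.le_add_left (2 * n + N - 1) m)
      exact mul_le_mul_of_nonneg_left (by exact_mod_cast this) (le_of_lt (factR_pos m))
    have step : ((x / 2) ^ 2) ^ m * |x / 2| ^ (2 * n + N - 1) /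
        ((Nat.factorial m : ℝ) * (Nat.factorial (m + (2 * n + N - 1)) : ℝ))
        ≤ ((x / 2) ^ 2) ^ m * |x / 2| ^ (2 * n + N - 1) /
          ((Nat.factorial m : ℝ) * (Nat.factorial (2 * n + N - 1) : ℝ)) := by
      apply div_le_div_of_nonneg_left (by positivity) (by positivity) hfacle
    refine (mul_le_mul_of_nonneg_left step (abs_nonneg _)).trans_eq ?_
    simp only [hGdef, hHdef]
    field_simp
  have hGH : Summable (fun q : ℕ × ℕ => G q.1 * H q.2) :=
    hG.mul_of_nonneg hH hGnn hHnn
  have hFabs : Summable (fun q : ℕ × ℕ => |F q|) :=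
    Summable.of_nonneg_of_le (fun q => abs_nonneg _) hFbound hGH
  have hFsum : Summable F := hFabs.of_abs
  -- rows
  have hrow : ∀ n : ℕ, ((2 * n + N : ℝ) - 1) * S n * besselJ (2 * n + N - 1) x
      = ∑' m, F (n, m) := by
    intro n
    rw [hBJ n, ← tsum_mul_left]
  -- claim 1
  have claim1 : Summable (fun p : ℕ =>
      |(-1 : ℝ) ^ p * c ^ p * (x / 2) ^ (2 * p) / (Nat.factorial p : ℝ) ^ 2|) := by
    refine Summable.of_nonneg_of_le (fun p => abs_nonneg _) (fun p => ?_)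
      (Real.summable_pow_div_factorial (|c| * (x / 2) ^ 2))
    have he : |(-1 : ℝ) ^ p * c ^ p * (x / 2) ^ (2 * p) / (Nat.factorial p : ℝ) ^ 2|
        = (|c| * (x / 2) ^ 2) ^ p / (Nat.factorial p : ℝ) ^ 2 := by
      rw [abs_div, abs_mul, abs_mul, abs_pow, abs_neg, abs_one, one_pow, one_mul,
        abs_pow, abs_pow, abs_pow, Nat.abs_cast, pow_mul, sq_abs, ← mul_pow]
    rw [he]
    apply div_le_div_of_nonneg_left (by positivity) (factR_pos p)
    calc (Nat.factorial p : ℝ) = (Nat.factorial p : ℝ) * 1 := by ring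
      _ ≤ (Nat.factorial p : ℝ) ^ 2 := by
          rw [sq]
          exact mul_le_mul_of_nonneg_left
            (by exact_mod_cast Nat.one_le_iff_ne_zero.mpr (Nat.factorial_pos p).ne')
            (le_of_lt (factR_pos p))
  -- claim 2
  have claim2 : Summable (fun n : ℕ =>
      |((2 * n + N : ℝ) - 1) * S n * besselJ (2 * n + N - 1) x|) := by
    refine Summable.of_nonneg_of_le (fun n => abs_nonneg _) (fun n => ?_)
      (hG.mul_right (∑' m, H m))
    rw [hrow n]
    have h1 : |∑' m, F (n, m)| ≤ ∑' m, |F (n, m)| := by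
      have := norm_tsum_le_tsum_norm (f := fun m => F (n, m)) ?_
      · simpa [Real.norm_eq_abs] using this
      · simpa [Real.norm_eq_abs] using (hFabs.prod_factor n)
    refine h1.trans ?_
    calc ∑' m, |F (n, m)| ≤ ∑' m, G n * H m := by
          refine Summable.tsum_le_tsum (fun m => hFbound (n, m)) (hFabs.prod_factor n) (hH.mul_left (G n))
      _ = G n * ∑' m, H m := tsum_mul_left
  refine ⟨claim1, claim2, ?_⟩
  -- the equality
  have hLHS : (x / 2) ^ (N - 1) *
      ∑' p : ℕ, (-1 : ℝ) ^ p * c ^ p * (x / 2) ^ (2 * p) / (Nat.factorial p : ℝ) ^ 2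
      = ∑' k : ℕ, (-1 : ℝ) ^ k * c ^ k / (Nat.factorial k : ℝ) ^ 2 * (x / 2) ^ (2 * k + (N - 1)) := by
    rw [← tsum_mul_left]
    refine tsum_congr fun k => ?_
    rw [pow_add]
    ring
  rw [hLHS]
  -- per-k antidiagonal sums
  have hdiag : ∀ k : ℕ, ∑ q ∈ Finset.HasAntidiagonal.antidiagonal k, F q
      = (-1 : ℝ) ^ k * c ^ k / (Nat.factorial k : ℝ) ^ 2 * (x / 2) ^ (2 * k + (N - 1)) := by
    intro k
    rw [Finset.Nat.sum_antidiagonal_eq_sum_range_succ_mk]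
    have hterm : ∀ n ∈ range (k + 1), F (n, k - n)
        = (((2 * n + N : ℝ) - 1) * S n *
            ((-1 : ℝ) ^ (k - n) / ((Nat.factorial (k - n) : ℝ) *
              (Nat.factorial (k + n + N - 1) : ℝ)))) * (x / 2) ^ (2 * k + (N - 1)) := by
      intro n hn
      rw [mem_range] at hn
      have hnk : n ≤ k := by omega
      simp only [hFdef, hBdef]
      have e1 : k - n + (2 * n + N - 1) = k + n + N - 1 := by omega
      have e2 : 2 * (k - n) + (2 * n + N - 1) = 2 * k + (N - 1) := by omega
      rw [e1, e2]
      ring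
    rw [Finset.sum_congr rfl hterm, ← Finset.sum_mul]
    rw [show (∑ n ∈ range (k + 1), ((2 * n + N : ℝ) - 1) * S n *
        ((-1 : ℝ) ^ (k - n) / ((Nat.factorial (k - n) : ℝ) *
          (Nat.factorial (k + n + N - 1) : ℝ))))
      = (-1 : ℝ) ^ k * c ^ k / (Nat.factorial k : ℝ) ^ 2 from coeff N hN c k]
  -- rearrangement
  calc ∑' k : ℕ, (-1 : ℝ) ^ k * c ^ k / (Nat.factorial k : ℝ) ^ 2 * (x / 2) ^ (2 * k + (N - 1))
      = ∑' k : ℕ, ∑ q ∈ Finset.HasAntidiagonal.antidiagonal k, F q := by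
        exact tsum_congr fun k => (hdiag k).symm
    _ = ∑' q : ℕ × ℕ, F q := by
        have hsig : Summable fun σ : (k : ℕ) × {y // y ∈ Finset.HasAntidiagonal.antidiagonal k} =>
            F (Finset.HasAntidiagonal.sigmaAntidiagonalEquivProd σ) := (Equiv.summable_iff _).2 hFsum
        have h2 : ∑' σ : (k : ℕ) × {y // y ∈ Finset.HasAntidiagonal.antidiagonal k},
              F (Finset.HasAntidiagonal.sigmaAntidiagonalEquivProd σ)
            = ∑' (k : ℕ), ∑' q : {y // y ∈ Finset.HasAntidiagonal.antidiagonal k},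
              F (Finset.HasAntidiagonal.sigmaAntidiagonalEquivProd ⟨k, q⟩) :=
          Summable.tsum_sigma' (fun k => (hasSum_fintype _).summable) hsig
        rw [← Finset.HasAntidiagonal.sigmaAntidiagonalEquivProd.tsum_eq F, h2]
        refine (tsum_congr fun k => ?_).symm
        rw [← Finset.sum_finset_coe, ← tsum_fintype (L := SummationFilter.unconditional _)]
        rfl
    _ = ∑' n : ℕ, ∑' m : ℕ, F (n, m) := Summable.tsum_prod' hFsum fun n => hFsum.prod_factor n
    _ = ∑' n : ℕ, ((2 * n + N : ℝ) - 1) * S n * besselJ (2 * n + N - 1) x :=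
        tsum_congr fun n => (hrow n).symm
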